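/- Let σ be the Boolean assignment induced by the first n moves of a play of the graph game on (G, C, s, R) (σ(x_l) = true iff the move through G(x_l) used the path through c_l and f_l), and let E be the current edge set after these n moves. Then for every i ∈ {1,…,m}: there exist j ∈ {1,2,3} and e ∈ E with (w_{i,j},e) ∈ R if and only if the clause F_i = (l_{i,1}∨l_{i,2}∨l_{i,3}) evaluates to true under σ. -/

import Mathlib

namespace PhutballQBF

/-- A literal: a variable `xₗ` (`pos l`) or its negation `¬xₗ` (`neg l`). -/
inductive Lit where
  | pos (l : ℕ)
  | neg (l : ℕ)
deriving DecidableEq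

/-- The index of the variable occurring in a literal. -/
def Lit.var : Lit → ℕ
  | .pos l => l
  | .neg l => l

/-- Evaluation of a literal under a Boolean assignment. -/
def Lit.eval (σ : ℕ → Bool) : Lit → Bool
  | .pos l => σ l
  | .neg l => !(σ l)

/-- Well-formedness of the 3CNF `F = F₁ ∧ ⋯ ∧ F_m`: the literal `l_{i,j}` (for
`1 ≤ i ≤ m`, `1 ≤ j ≤ 3`) mentions one of the variables `x₁, …, xₙ`. -/
def LitWF (n m : ℕ) (lit : ℕ → ℕ → Lit) : Prop :=
  ∀ i j, 1 ≤ i → i ≤ m → 1 ≤ j → j ≤ 3 → 1 ≤ (lit i j).var ∧ (lit i j).var ≤ n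

/-- The clause `Fᵢ = (l_{i,1} ∨ l_{i,2} ∨ l_{i,3})` evaluates to true under `σ`. -/
def ClauseTrue (lit : ℕ → ℕ → Lit) (i : ℕ) (σ : ℕ → Bool) : Prop :=
  ∃ j, 1 ≤ j ∧ j ≤ 3 ∧ (lit i j).eval σ = true

/-- The 3CNF formula `F = F₁ ∧ ⋯ ∧ F_m` evaluates to true under `σ`. -/
def FTrue (lit : ℕ → ℕ → Lit) (m : ℕ) (σ : ℕ → Bool) : Prop :=
  ∀ i, 1 ≤ i → i ≤ m → ClauseTrue lit i σ

/-- `QAux P i k σ`: the quantified statement with `k` variables `x_i, …, x_{i+k-1}`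
still to be quantified (existentially when the index is odd, universally when even),
the remaining variables having the values recorded in `σ`. -/
def QAux (P : (ℕ → Bool) → Prop) : ℕ → ℕ → (ℕ → Bool) → Prop
  | _, 0, σ => P σ
  | i, k + 1, σ =>
      if i % 2 = 1 then ∃ b, QAux P (i + 1) k (Function.update σ i b)
      else ∀ b, QAux P (i + 1) k (Function.update σ i b)

/-- Truth of the restricted quantified Boolean formula
`Q = ∃x₁ ∀x₂ ∃x₃ ⋯ ∀xₙ F(x₁, …, xₙ)`. -/
def QTrue (n m : ℕ) (lit : ℕ → ℕ → Lit) : Prop :=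
  QAux (FTrue lit m) 1 n (fun _ => false)

/-- The vertices of the graph `G` built from `Q` (with natural-number indices;
`g 0` is the extra vertex `g₀`). -/
inductive Vtx where
  | a (i : ℕ) | b (i : ℕ) | c (i : ℕ) | d (i : ℕ) | e (i : ℕ) | f (i : ℕ) | g (i : ℕ)
  | x (i : ℕ) | y (i : ℕ) | z (i : ℕ) | w (i : ℕ) (j : ℕ)
deriving DecidableEq

/-- A directed edge. -/
abbrev Edge := Vtx × Vtx

/-- The edge set `E(G)` of the graph `G` constructed from `Q` (with `n` variables and
`m` clauses): the variable components `G(xᵢ)`, the connecting edges `(gᵢ, aᵢ₊₁)` for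
`i = 0, …, n-1`, the edge `(gₙ, x₁)`, and the formula component `G(F)`. -/
def EG (n m : ℕ) : Set Edge :=
  { p | (∃ i, 1 ≤ i ∧ i ≤ n ∧
          (p = (Vtx.a i, Vtx.b i) ∨ p = (Vtx.a i, Vtx.c i) ∨ p = (Vtx.b i, Vtx.e i) ∨
           p = (Vtx.c i, Vtx.f i) ∨ p = (Vtx.e i, Vtx.d i) ∨ p = (Vtx.f i, Vtx.d i) ∨
           p = (Vtx.d i, Vtx.g i))) ∨
        (∃ i, i ≤ n - 1 ∧ p = (Vtx.g i, Vtx.a (i + 1))) ∨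
        p = (Vtx.g n, Vtx.x 1) ∨
        (∃ i, 1 ≤ i ∧ i ≤ m ∧
          (p = (Vtx.x i, Vtx.y i) ∨ p = (Vtx.y i, Vtx.z i) ∨ p = (Vtx.z i, Vtx.w i 1) ∨
           p = (Vtx.w i 1, Vtx.w i 2) ∨ p = (Vtx.w i 2, Vtx.w i 3))) ∨
        (∃ i, 1 ≤ i ∧ i ≤ m - 1 ∧ p = (Vtx.x i, Vtx.x (i + 1))) }

/-- The set `C = {g₀, g₁, …, g_{n-1}} ∪ {z₁, …, z_m}`. -/
def Cset (n m : ℕ) : Set Vtx :=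
  { v | (∃ i, i ≤ n - 1 ∧ v = Vtx.g i) ∨ (∃ i, 1 ≤ i ∧ i ≤ m ∧ v = Vtx.z i) }

/-- The relation `R ⊆ V(G) × E(G)`: `(w_{i,j}, (bₗ, eₗ)) ∈ R` iff `l_{i,j} = xₗ`, and
`(w_{i,j}, (cₗ, fₗ)) ∈ R` iff `l_{i,j} = ¬xₗ`. -/
def Rrel (lit : ℕ → ℕ → Lit) (m : ℕ) : Set (Vtx × Edge) :=
  { p | ∃ i j, 1 ≤ i ∧ i ≤ m ∧ 1 ≤ j ∧ j ≤ 3 ∧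
        ((∃ l, lit i j = Lit.pos l ∧ p = (Vtx.w i j, (Vtx.b l, Vtx.e l))) ∨
         (∃ l, lit i j = Lit.neg l ∧ p = (Vtx.w i j, (Vtx.c l, Vtx.f l)))) }

/-- `Rinv R E = R⁻¹(E)`: the vertices pointing some edge of `E`. -/
def Rinv (R : Set (Vtx × Edge)) (E : Set Edge) : Set Vtx :=
  { v | ∃ e ∈ E, (v, e) ∈ R }

/-- The set of (directed) edges traversed by a path given as its list of vertices. -/
def pathEdges (p : List Vtx) : Set Edge := { e | e ∈ p.zip p.tail }

/-- A legal move of the graph game from active vertex `u ∈ C` with current edge set `E`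
along the directed path `p` (a list of at least two pairwise distinct vertices whose
consecutive pairs are edges of `E`), ending at a vertex `v ∈ C ∪ R⁻¹(E)`, with all
internal vertices of `p` outside `C ∪ R⁻¹(E)`; the resulting edge set `E'` is obtained
by deleting the edges of `p` from `E`. -/
def LegalMoveVia (C : Set Vtx) (R : Set (Vtx × Edge))
    (u : Vtx) (E : Set Edge) (v : Vtx) (E' : Set Edge) (p : List Vtx) : Prop :=
  u ∈ C ∧ v ∈ C ∪ Rinv R E ∧
  2 ≤ p.length ∧ p.Nodup ∧
  p.head? = some u ∧ p.getLast? = some v ∧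
  List.Chain' (fun a b => (a, b) ∈ E) p ∧
  (∀ w ∈ (p.drop 1).dropLast, w ∉ C ∪ Rinv R E) ∧
  E' = E \ pathEdges p

/-- A legal move from `(u, E)` to `(v, E')` (along some path). -/
def LegalMove (C : Set Vtx) (R : Set (Vtx × Edge))
    (u : Vtx) (E : Set Edge) (v : Vtx) (E' : Set Edge) : Prop :=
  ∃ p, LegalMoveVia C R u E v E' p

/-- `MoverWins C R true u E` says that the player to move at the position with active
vertex `u` and current edge set `E` has a winning strategy; `MoverWins C R false u E`
says that the player to move loses whatever he does (in particular, if he has no legal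
move he loses immediately; a move to a vertex of `R⁻¹(E)` wins the game for the mover). -/
inductive MoverWins (C : Set Vtx) (R : Set (Vtx × Edge)) : Bool → Vtx → Set Edge → Prop
  | winsNow {u E v E'} : LegalMove C R u E v E' → v ∈ Rinv R E →
      MoverWins C R true u E
  | winsLater {u E v E'} : LegalMove C R u E v E' → MoverWins C R false v E' →
      MoverWins C R true u E
  | loses {u E} :
      (∀ v E', LegalMove C R u E v E' → v ∉ Rinv R E) →
      (∀ v E', LegalMove C R u E v E' → MoverWins C R true v E') →
      MoverWins C R false u E

/-- The two players of the graph game. -/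
inductive Player where
  | ex | fa
deriving DecidableEq

/-- The opponent of a player. -/
def Player.other : Player → Player
  | .ex => .fa
  | .fa => .ex

/-- A (maximal) play of the graph game on `(G, C, s, R)` starting from active vertex `s`
and edge set `E0`, with the ∃-player moving first.  `act k` and `edg k` are the active
vertex and edge set after `k` moves, `turn k` is the player who makes the `(k+1)`-st
move, and `len` is the total number of moves.  The play stops either because its last
move reached a vertex of `R⁻¹(E)` (the mover wins) or because the player to move has no
legal move (he loses); before that, no move may end in `R⁻¹(E)` without stopping. -/
structure Play (C : Set Vtx) (R : Set (Vtx × Edge)) (s : Vtx) (E0 : Set Edge) where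
  len : ℕ
  act : ℕ → Vtx
  edg : ℕ → Set Edge
  turn : ℕ → Player
  init_act : act 0 = s
  init_edg : edg 0 = E0
  init_turn : turn 0 = Player.ex
  turn_alt : ∀ k, turn (k + 1) = (turn k).other
  step : ∀ k, k < len → LegalMove C R (act k) (edg k) (act (k + 1)) (edg (k + 1))
  not_over : ∀ k, k + 1 < len → act (k + 1) ∉ Rinv R (edg k)
  maximal : (0 < len ∧ act len ∈ Rinv R (edg (len - 1))) ∨
            (∀ v E', ¬ LegalMove C R (act len) (edg len) v E')


section Listy
variable {α : Type*}

lemma zip_tail_mem_cons {a b x : α} {xs : List α}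
    (h : (a, b) ∈ xs.zip xs.tail) : (a, b) ∈ (x :: xs).zip (x :: xs).tail := by
  cases xs with
  | nil => simp at h
  | cons y ys => exact List.mem_cons_of_mem _ h

lemma chain'_zip {R : α → α → Prop} : ∀ {p : List α}, List.Chain' R p →
    ∀ {a b : α}, (a, b) ∈ p.zip p.tail → R a b := by
  intro p
  induction p with
  | nil => intro _ a b h; simp at h
  | cons x xs ih =>
    intro hc a b h
    cases xs with
    | nil => simp at h
    | cons y ys =>
      rcases List.isChain_cons_cons.mp hc with ⟨hxy, hc'⟩
      rcases List.mem_cons.mp h with h | h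
      · cases h; exact hxy
      · exact ih hc' h

lemma exists_pred : ∀ {p : List α} {h v : α}, p.head? = some h → v ∈ p → v ≠ h →
    ∃ u, (u, v) ∈ p.zip p.tail := by
  intro p
  induction p with
  | nil => intro h v hh hv; simp at hv
  | cons x xs ih =>
    intro h v hh hv hne
    simp only [List.head?_cons, Option.some.injEq] at hh
    subst hh
    rcases List.mem_cons.mp hv with rfl | hv
    · exact absurd rfl hne
    · cases xs with
      | nil => simp at hv
      | cons y ys =>
        by_cases hvy : v = y
        · subst hvy; exact ⟨x, List.mem_cons_self⟩
        · obtain ⟨u, hu⟩ := ih (h := y) rfl hv hvy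
          exact ⟨u, zip_tail_mem_cons hu⟩

lemma fst_mem_dropLast : ∀ {p : List α} {a b : α}, (a, b) ∈ p.zip p.tail → a ∈ p.dropLast := by
  intro p
  induction p with
  | nil => intro a b h; simp at h
  | cons x xs ih =>
    intro a b h
    cases xs with
    | nil => simp at h
    | cons y ys =>
      rcases List.mem_cons.mp h with h | h
      · cases h; simp
      · have := ih h
        rw [List.dropLast_cons₂]
        exact List.mem_cons_of_mem _ this

lemma mem_internal : ∀ {p : List α} {h v w : α}, p.head? = some h → v ≠ h →
    (v, w) ∈ p.zip p.tail → v ∈ p.tail.dropLast := by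
  intro p h v w hh hne hz
  cases p with
  | nil => simp at hz
  | cons x xs =>
    simp only [List.head?_cons, Option.some.injEq] at hh
    subst hh
    cases xs with
    | nil => simp at hz
    | cons y ys =>
      rcases List.mem_cons.mp hz with h | h
      · cases h; exact absurd rfl hne
      · exact fst_mem_dropLast h

lemma last_mem : ∀ {p : List α} {v : α}, p.getLast? = some v → v ∈ p := by
  intro p v h
  obtain ⟨hne, rfl⟩ := List.mem_getLast?_eq_getLast (show v ∈ p.getLast? from h)
  exact List.getLast_mem hne

lemma last_ne_head : ∀ {p : List α} {h v : α}, p.head? = some h → p.getLast? = some v →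
    p.Nodup → 2 ≤ p.length → v ≠ h := by
  intro p h v hh hl hnd hlen
  cases p with
  | nil => simp at hh
  | cons x xs =>
    simp only [List.head?_cons, Option.some.injEq] at hh
    subst hh
    cases xs with
    | nil => simp at hlen
    | cons y ys =>
      rw [List.getLast?_cons_cons] at hl
      have hv : v ∈ y :: ys := last_mem hl
      have hx : x ∉ y :: ys := (List.nodup_cons.mp hnd).1
      intro he; subst he; exact hx hv
end Listy


section Aux
variable {n m : ℕ}

lemma in_a {u : Vtx} {l : ℕ} (h : (u, Vtx.a l) ∈ EG n m) :
    ∃ i, i ≤ n - 1 ∧ u = Vtx.g i ∧ l = i + 1 := by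
  simp only [EG, Set.mem_setOf_eq, Prod.mk.injEq] at h
  aesop

lemma in_b {u : Vtx} {l : ℕ} (h : (u, Vtx.b l) ∈ EG n m) : u = Vtx.a l := by
  simp only [EG, Set.mem_setOf_eq, Prod.mk.injEq] at h
  aesop

lemma in_c {u : Vtx} {l : ℕ} (h : (u, Vtx.c l) ∈ EG n m) : u = Vtx.a l := by
  simp only [EG, Set.mem_setOf_eq, Prod.mk.injEq] at h
  aesop

lemma in_e {u : Vtx} {l : ℕ} (h : (u, Vtx.e l) ∈ EG n m) : u = Vtx.b l := by
  simp only [EG, Set.mem_setOf_eq, Prod.mk.injEq] at h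
  aesop

lemma in_f {u : Vtx} {l : ℕ} (h : (u, Vtx.f l) ∈ EG n m) : u = Vtx.c l := by
  simp only [EG, Set.mem_setOf_eq, Prod.mk.injEq] at h
  aesop

lemma in_d {u : Vtx} {l : ℕ} (h : (u, Vtx.d l) ∈ EG n m) : u = Vtx.e l ∨ u = Vtx.f l := by
  simp only [EG, Set.mem_setOf_eq, Prod.mk.injEq] at h
  aesop

lemma in_g {u : Vtx} {l : ℕ} (h : (u, Vtx.g l) ∈ EG n m) : u = Vtx.d l := by
  simp only [EG, Set.mem_setOf_eq, Prod.mk.injEq] at h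
  aesop

lemma in_x {u : Vtx} {l : ℕ} (h : (u, Vtx.x l) ∈ EG n m) :
    (l = 1 ∧ u = Vtx.g n) ∨ (∃ i, 1 ≤ i ∧ l = i + 1 ∧ u = Vtx.x i) := by
  simp only [EG, Set.mem_setOf_eq, Prod.mk.injEq] at h
  aesop

lemma in_y {u : Vtx} {l : ℕ} (h : (u, Vtx.y l) ∈ EG n m) : u = Vtx.x l := by
  simp only [EG, Set.mem_setOf_eq, Prod.mk.injEq] at h
  aesop

lemma in_z {u : Vtx} {l : ℕ} (h : (u, Vtx.z l) ∈ EG n m) : u = Vtx.y l ∧ 1 ≤ l ∧ l ≤ m := by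
  simp only [EG, Set.mem_setOf_eq, Prod.mk.injEq] at h
  aesop

lemma in_w {u : Vtx} {l j : ℕ} (h : (u, Vtx.w l j) ∈ EG n m) :
    1 ≤ l ∧ l ≤ m ∧ ((j = 1 ∧ u = Vtx.z l) ∨ (j = 2 ∧ u = Vtx.w l 1) ∨ (j = 3 ∧ u = Vtx.w l 2)) := by
  simp only [EG, Set.mem_setOf_eq, Prod.mk.injEq] at h
  aesop

end Aux



set_option linter.unusedSectionVars false

section Chase

variable {n m : ℕ} {lit : ℕ → ℕ → Lit} {E : Set Edge} {p : List Vtx} {j : ℕ}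

lemma g_mem_Cset {i : ℕ} (hi : i ≤ n - 1) : Vtx.g i ∈ Cset n m :=
  Set.mem_setOf_eq ▸ Or.inl ⟨i, hi, rfl⟩

lemma z_mem_Cset {i : ℕ} (h1 : 1 ≤ i) (h2 : i ≤ m) : Vtx.z i ∈ Cset n m :=
  Set.mem_setOf_eq ▸ Or.inr ⟨i, h1, h2, rfl⟩

variable (hE : E ⊆ EG n m)
  (hchain : List.Chain' (fun a b => (a, b) ∈ E) p)
  (hhead : p.head? = some (Vtx.g j))
  (hint : ∀ w ∈ (p.drop 1).dropLast, w ∉ Cset n m ∪ Rinv (Rrel lit m) E)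

include hE hchain hhead hint

lemma not_internal_Cset {u t : Vtx} (hu : (u, t) ∈ p.zip p.tail) (hne : u ≠ Vtx.g j) :
    u ∉ Cset n m := by
  intro hC
  have : u ∈ (p.drop 1).dropLast := by
    rw [List.drop_one]; exact mem_internal hhead hne hu
  exact hint _ this (Set.mem_union_left _ hC)

lemma comp_chase {l : ℕ} (hl : Vtx.a l ∈ p) : l = j + 1 := by
  obtain ⟨u, hu⟩ := exists_pred hhead hl (by simp)
  obtain ⟨i, hi, rfl, rfl⟩ := in_a (hE (chain'_zip hchain hu))
  by_cases hij : i = j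
  · omega
  · exact absurd (g_mem_Cset hi)
      (not_internal_Cset hE hchain hhead hint hu (by simpa using hij))

lemma comp_edges_not_deleted {l : ℕ} (hl : l ≠ j + 1) :
    (Vtx.b l, Vtx.e l) ∉ pathEdges p ∧ (Vtx.c l, Vtx.f l) ∉ pathEdges p := by
  constructor
  · intro hmem
    have hb : Vtx.b l ∈ p := (List.of_mem_zip hmem).1
    obtain ⟨u, hu⟩ := exists_pred hhead hb (by simp)
    have h1 := in_b (hE (chain'_zip hchain hu)); subst h1
    exact hl (comp_chase hE hchain hhead hint (List.of_mem_zip hu).1)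
  · intro hmem
    have hb : Vtx.c l ∈ p := (List.of_mem_zip hmem).1
    obtain ⟨u, hu⟩ := exists_pred hhead hb (by simp)
    have h1 := in_c (hE (chain'_zip hchain hu)); subst h1
    exact hl (comp_chase hE hchain hhead hint (List.of_mem_zip hu).1)

lemma g_chase {i : ℕ} (hgi : Vtx.g i ∈ p) (hne : Vtx.g i ≠ Vtx.g j) : i = j + 1 := by
  obtain ⟨u1, hu1⟩ := exists_pred hhead hgi hne
  have h1 := in_g (hE (chain'_zip hchain hu1)); subst h1
  obtain ⟨u2, hu2⟩ := exists_pred hhead (List.of_mem_zip hu1).1 (by simp)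
  rcases in_d (hE (chain'_zip hchain hu2)) with h2 | h2 <;> subst h2
  · obtain ⟨u3, hu3⟩ := exists_pred hhead (List.of_mem_zip hu2).1 (by simp)
    have h3 := in_e (hE (chain'_zip hchain hu3)); subst h3
    obtain ⟨u4, hu4⟩ := exists_pred hhead (List.of_mem_zip hu3).1 (by simp)
    have h4 := in_b (hE (chain'_zip hchain hu4)); subst h4
    exact comp_chase hE hchain hhead hint (List.of_mem_zip hu4).1
  · obtain ⟨u3, hu3⟩ := exists_pred hhead (List.of_mem_zip hu2).1 (by simp)
    have h3 := in_f (hE (chain'_zip hchain hu3)); subst h3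
    obtain ⟨u4, hu4⟩ := exists_pred hhead (List.of_mem_zip hu3).1 (by simp)
    have h4 := in_c (hE (chain'_zip hchain hu4)); subst h4
    exact comp_chase hE hchain hhead hint (List.of_mem_zip hu4).1

lemma x_chase (hj : j + 2 ≤ n) : ∀ i, Vtx.x i ∈ p → False := by
  intro i
  induction i using Nat.strong_induction_on with
  | _ i ih =>
    intro hxi
    obtain ⟨u, hu⟩ := exists_pred hhead hxi (by simp)
    rcases in_x (hE (chain'_zip hchain hu)) with ⟨rfl, rfl⟩ | ⟨i', h1, rfl, rfl⟩
    · have : n = j + 1 :=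
        g_chase hE hchain hhead hint (List.of_mem_zip hu).1 (by simp; omega)
      omega
    · exact ih i' (by omega) (List.of_mem_zip hu).1

lemma z_chase (hj : j + 2 ≤ n) {i : ℕ} (hz : Vtx.z i ∈ p) : False := by
  obtain ⟨u, hu⟩ := exists_pred hhead hz (by simp)
  obtain ⟨h1, -, -⟩ := in_z (hE (chain'_zip hchain hu)); subst h1
  obtain ⟨u2, hu2⟩ := exists_pred hhead (List.of_mem_zip hu).1 (by simp)
  have h2 := in_y (hE (chain'_zip hchain hu2)); subst h2
  exact x_chase hE hchain hhead hint hj _ (List.of_mem_zip hu2).1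

lemma w_chase : ∀ jj, ∀ i, Vtx.w i jj ∈ p → False := by
  intro jj
  induction jj using Nat.strong_induction_on with
  | _ jj ih =>
    intro i hwi
    obtain ⟨u, hu⟩ := exists_pred hhead hwi (by simp)
    obtain ⟨h1, h2, hc⟩ := in_w (hE (chain'_zip hchain hu))
    rcases hc with ⟨rfl, rfl⟩ | ⟨rfl, rfl⟩ | ⟨rfl, rfl⟩
    · exact not_internal_Cset hE hchain hhead hint hu (by simp) (z_mem_Cset h1 h2)
    · exact ih 1 (by omega) i (List.of_mem_zip hu).1
    · exact ih 2 (by omega) i (List.of_mem_zip hu).1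

end Chase

lemma move_from_g {n m : ℕ} {lit : ℕ → ℕ → Lit} {E E' : Set Edge} {j : ℕ} {v : Vtx}
    (hE : E ⊆ EG n m) (hj : j + 2 ≤ n)
    (hmv : LegalMove (Cset n m) (Rrel lit m) (Vtx.g j) E v E') : v = Vtx.g (j + 1) := by
  obtain ⟨p, huC, hvC, hlen, hnd, hhead, hlast, hchain, hint, hE'⟩ := hmv
  have hvp : v ∈ p := last_mem hlast
  have hvne : v ≠ Vtx.g j := last_ne_head hhead hlast hnd hlen
  rcases hvC with hvC | hvC
  · rcases hvC with ⟨i, hi, rfl⟩ | ⟨i, h1, h2, rfl⟩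
    · rw [g_chase hE hchain hhead hint hvp hvne]
    · exact absurd (z_chase hE hchain hhead hint hj hvp) not_false
  · obtain ⟨e, heE, heR⟩ := hvC
    obtain ⟨i', j', hi1, hi2, hj1, hj3, hd⟩ := heR
    exfalso
    rcases hd with ⟨l, hlit, heq⟩ | ⟨l, hlit, heq⟩ <;>
      (have hveq : v = Vtx.w i' j' := congrArg Prod.fst heq;
       exact w_chase hE hchain hhead hint j' i' (hveq ▸ hvp))


/-- Let `σ` be the Boolean assignment induced by the first `n` moves of
a play of the graph game on `(G, C, s, R)` (`σ(xₗ) = true` iff the move through `G(xₗ)`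
— the `l`-th move — used the path through `cₗ` and `fₗ`, i.e. deleted the edge
`(cₗ, fₗ)`), and let `E = P.edg n` be the current edge set after these `n` moves.  Then
for every `i ∈ {1, …, m}`: there exist `j ∈ {1,2,3}` and `e ∈ E` with `(w_{i,j}, e) ∈ R`
if and only if the clause `Fᵢ = (l_{i,1} ∨ l_{i,2} ∨ l_{i,3})` evaluates to true
under `σ`. -/
theorem pointed_edge_iff_clause_true
    (n m : ℕ) (hn : Even n) (hn2 : 2 ≤ n) (hm : 1 ≤ m)
    (lit : ℕ → ℕ → Lit) (hwf : LitWF n m lit)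
    (P : Play (Cset n m) (Rrel lit m) (Vtx.g 0) (EG n m))
    (hlen : n ≤ P.len)
    (σ : ℕ → Bool)
    (hσ : ∀ l, 1 ≤ l → l ≤ n →
      (σ l = true ↔ (Vtx.c l, Vtx.f l) ∈ P.edg (l - 1) \ P.edg l) ∧
      (σ l = false ↔ (Vtx.b l, Vtx.e l) ∈ P.edg (l - 1) \ P.edg l)) :
    ∀ i, 1 ≤ i → i ≤ m →
      ((∃ j e, 1 ≤ j ∧ j ≤ 3 ∧ e ∈ P.edg n ∧ (Vtx.w i j, e) ∈ Rrel lit m) ↔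
        ClauseTrue lit i σ) := by
  have hsub : ∀ k, k ≤ n → P.edg k ⊆ EG n m := by
    intro k
    induction k with
    | zero => intro _; rw [P.init_edg]
    | succ k ih =>
      intro hk
      obtain ⟨p, hp⟩ := P.step k (by omega)
      rw [hp.2.2.2.2.2.2.2.2]
      exact fun e he => ih (by omega) he.1
  have hact : ∀ k, k + 1 ≤ n → P.act k = Vtx.g k := by
    intro k
    induction k with
    | zero => intro _; rw [P.init_act]
    | succ k ih =>
      intro hk
      have hmv := P.step k (by omega)
      rw [ih (by omega)] at hmv
      exact move_from_g (hsub k (by omega)) (by omega) hmv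
  have hkeep : ∀ k, k < n → ∀ l, l ≠ k + 1 →
      ((Vtx.b l, Vtx.e l) ∈ P.edg k ↔ (Vtx.b l, Vtx.e l) ∈ P.edg (k+1)) ∧
      ((Vtx.c l, Vtx.f l) ∈ P.edg k ↔ (Vtx.c l, Vtx.f l) ∈ P.edg (k+1)) := by
    intro k hk l hl
    obtain ⟨p, huC, hvC, hlen2, hnd, hhead, hlast, hchain, hintl, hE'⟩ := P.step k (by omega)
    rw [hact k (by omega)] at hhead
    have hnd2 := comp_edges_not_deleted (hsub k (by omega)) hchain hhead hintl hl
    rw [hE']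
    exact ⟨⟨fun h => ⟨h, hnd2.1⟩, fun h => h.1⟩, ⟨fun h => ⟨h, hnd2.2⟩, fun h => h.1⟩⟩
  have hbelow : ∀ l, 1 ≤ l → l ≤ n → ∀ k, k + 1 ≤ l →
      (Vtx.b l, Vtx.e l) ∈ P.edg k ∧ (Vtx.c l, Vtx.f l) ∈ P.edg k := by
    intro l h1 h2 k
    induction k with
    | zero =>
      intro _
      rw [P.init_edg]
      exact ⟨Or.inl ⟨l, h1, h2, Or.inr (Or.inr (Or.inl rfl))⟩,
             Or.inl ⟨l, h1, h2, Or.inr (Or.inr (Or.inr (Or.inl rfl)))⟩⟩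
    | succ k ih =>
      intro hk
      have hp := ih (by omega)
      have hkp := hkeep k (by omega) l (by omega)
      exact ⟨hkp.1.mp hp.1, hkp.2.mp hp.2⟩
  have habove : ∀ l, 1 ≤ l → l ≤ n → ∀ k, l ≤ k → k ≤ n →
      (((Vtx.b l, Vtx.e l) ∈ P.edg l ↔ (Vtx.b l, Vtx.e l) ∈ P.edg k) ∧
       ((Vtx.c l, Vtx.f l) ∈ P.edg l ↔ (Vtx.c l, Vtx.f l) ∈ P.edg k)) := by
    intro l h1 h2 k
    induction k with
    | zero => intro hk1 hk2; exact absurd hk1 (by omega)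
    | succ k ih =>
      intro hk1 hk2
      rcases Nat.lt_or_ge l (k+1) with h | h
      · have hi := ih (by omega) (by omega)
        have hkp := hkeep k (by omega) l (by omega)
        exact ⟨hi.1.trans hkp.1, hi.2.trans hkp.2⟩
      · have hlk : l = k + 1 := by omega
        subst hlk; exact ⟨Iff.rfl, Iff.rfl⟩
  have hmem : ∀ l, 1 ≤ l → l ≤ n →
      (((Vtx.b l, Vtx.e l) ∈ P.edg n ↔ σ l = true) ∧
       ((Vtx.c l, Vtx.f l) ∈ P.edg n ↔ σ l = false)) := by
    intro l h1 h2
    obtain ⟨hbel_b, hbel_c⟩ := hbelow l h1 h2 (l-1) (by omega)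
    obtain ⟨hab_b, hab_c⟩ := habove l h1 h2 n h2 le_rfl
    obtain ⟨hσt, hσf⟩ := hσ l h1 h2
    have hnb : (Vtx.b l, Vtx.e l) ∉ P.edg n ↔ σ l = false :=
      ⟨fun h => hσf.mpr ⟨hbel_b, fun hh => h (hab_b.mp hh)⟩,
       fun h hmem' => (hσf.mp h).2 (hab_b.mpr hmem')⟩
    have hnc : (Vtx.c l, Vtx.f l) ∉ P.edg n ↔ σ l = true :=
      ⟨fun h => hσt.mpr ⟨hbel_c, fun hh => h (hab_c.mp hh)⟩,
       fun h hmem' => (hσt.mp h).2 (hab_c.mpr hmem')⟩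
    constructor
    · have := not_iff_not.mpr hnb; simpa using this
    · have := not_iff_not.mpr hnc; simpa using this
  intro i hi1 hi2
  constructor
  · rintro ⟨j, e, hj1, hj3, he, hR⟩
    obtain ⟨i', j', hi'1, hi'2, hj'1, hj'3, hd⟩ := hR
    rcases hd with ⟨l, hlit, heq⟩ | ⟨l, hlit, heq⟩
    · rw [Prod.mk.injEq] at heq
      obtain ⟨hw, rfl⟩ := heq
      rw [Vtx.w.injEq] at hw
      obtain ⟨rfl, rfl⟩ := hw
      have hrange := hwf i j hi1 hi2 hj1 hj3
      rw [hlit] at hrange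
      simp only [Lit.var] at hrange
      refine ⟨j, hj1, hj3, ?_⟩
      rw [hlit]
      exact (hmem l hrange.1 hrange.2).1.mp he
    · rw [Prod.mk.injEq] at heq
      obtain ⟨hw, rfl⟩ := heq
      rw [Vtx.w.injEq] at hw
      obtain ⟨rfl, rfl⟩ := hw
      have hrange := hwf i j hi1 hi2 hj1 hj3
      rw [hlit] at hrange
      simp only [Lit.var] at hrange
      refine ⟨j, hj1, hj3, ?_⟩
      rw [hlit]
      have hf := (hmem l hrange.1 hrange.2).2.mp he
      simp [Lit.eval, hf]
  · rintro ⟨j, hj1, hj3, hev⟩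
    have hrange := hwf i j hi1 hi2 hj1 hj3
    cases hlit : lit i j with
    | pos l =>
      rw [hlit] at hev hrange
      simp only [Lit.var] at hrange
      have hev' : σ l = true := hev
      exact ⟨j, (Vtx.b l, Vtx.e l), hj1, hj3,
        (hmem l hrange.1 hrange.2).1.mpr hev',
        ⟨i, j, hi1, hi2, hj1, hj3, Or.inl ⟨l, hlit, rfl⟩⟩⟩
    | neg l =>
      rw [hlit] at hev hrange
      simp only [Lit.var] at hrange
      have hev' : σ l = false := by simpa [Lit.eval] using hev
      exact ⟨j, (Vtx.c l, Vtx.f l), hj1, hj3,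
        (hmem l hrange.1 hrange.2).2.mpr hev',
        ⟨i, j, hi1, hi2, hj1, hj3, Or.inr ⟨l, hlit, rfl⟩⟩⟩

end PhutballQBF
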